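/- Let S, U, A, Y be finite sets with joint distribution P(s,u,a,y) = P(s)P(u|s)P(a|s,u)P(y|s,u,a), with positivity P(a|s,u) > 0 whenever P(s,u) > 0. Define the backdoor-adjusted (interventional) distribution P(y|s,do(a)) = Σ_u P(u|s)P(y|s,u,a). Then for any bounded f: S×A×Y → ℝ, E_{(s,a)~P}[ E_{y~P(·|s,do(a))}[f(s,a,y)] ] = E_{(s,a,u,y)~P}[ (P(u|s)/P(u|s,a)) · f(s,a,y) ]. -/

import Mathlib

open Finset

noncomputable section

variable {S U A Y : Type*} [Fintype S] [Fintype U] [Fintype A] [Fintype Y]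

/-- The joint distribution `P(s,u,a,y) = P(s)P(u|s)P(a|s,u)P(y|s,u,a)`. -/
def Jb (pS : S → ℝ) (pU : S → U → ℝ) (pA : S → U → A → ℝ) (pY : S → U → A → Y → ℝ)
    (s : S) (u : U) (a : A) (y : Y) : ℝ :=
  pS s * pU s u * pA s u a * pY s u a y

/-- The ordinary conditional `P(u | s, a)` of the joint distribution. -/
def cU (pS : S → ℝ) (pU : S → U → ℝ) (pA : S → U → A → ℝ) (pY : S → U → A → Y → ℝ)
    (s : S) (u : U) (a : A) : ℝ :=
  (∑ y, Jb pS pU pA pY s u a y) / (∑ u', ∑ y, Jb pS pU pA pY s u' a y)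

/-- Proposition 3 (backdoor reweighting): with `P(y|s,do(a)) = Σ_u P(u|s)P(y|s,u,a)`,
`E_{(s,a)~P}[ E_{y~P(·|s,do(a))}[f] ] = E_{(s,a,u,y)~P}[ (P(u|s)/P(u|s,a)) · f ]`. -/
theorem backdoor_reweighting_unbiased
    (pS : S → ℝ) (pU : S → U → ℝ) (pA : S → U → A → ℝ) (pY : S → U → A → Y → ℝ)
    (hpS : ∀ s, 0 ≤ pS s) (hS : ∑ s, pS s = 1)
    (hpU : ∀ s u, 0 ≤ pU s u) (hU : ∀ s, ∑ u, pU s u = 1)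
    (hpA : ∀ s u a, 0 ≤ pA s u a) (hA : ∀ s u, ∑ a, pA s u a = 1)
    (hpY : ∀ s u a y, 0 ≤ pY s u a y) (hY : ∀ s u a, ∑ y, pY s u a y = 1)
    (hpos : ∀ s u a, 0 < pS s * pU s u → 0 < pA s u a)
    (f : S → A → Y → ℝ) :
    (∑ s, ∑ a, (∑ u, ∑ y, Jb pS pU pA pY s u a y) *
        (∑ y, (∑ u, pU s u * pY s u a y) * f s a y))
      = ∑ s, ∑ u, ∑ a, ∑ y,
          Jb pS pU pA pY s u a y * ((pU s u / cU pS pU pA pY s u a) * f s a y) := by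
  have hnum : ∀ s u a, (∑ y, Jb pS pU pA pY s u a y) = pS s * pU s u * pA s u a := by
    intro s u a
    simp only [Jb, ← Finset.mul_sum, hY, mul_one]
  have key : ∀ s u a y,
      Jb pS pU pA pY s u a y * ((pU s u / cU pS pU pA pY s u a) * f s a y)
      = (∑ u', pS s * pU s u' * pA s u' a) * (pU s u * (pY s u a y * f s a y)) := by
    intro s u a y
    have hcU : cU pS pU pA pY s u a =
        pS s * pU s u * pA s u a / ∑ u', pS s * pU s u' * pA s u' a := by
      simp only [cU, hnum]
    rcases eq_or_lt_of_le (mul_nonneg (mul_nonneg (hpS s) (hpU s u)) (hpA s u a)) with h | h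
    · -- degenerate case : pS s * pU s u * pA s u a = 0
      have hJ : Jb pS pU pA pY s u a y = 0 := by
        show pS s * pU s u * pA s u a * pY s u a y = 0
        rw [← h, zero_mul]
      rw [hJ, zero_mul]
      have h0 : pS s * pU s u = 0 := by
        by_contra hne
        have hpos' : 0 < pS s * pU s u :=
          lt_of_le_of_ne (mul_nonneg (hpS s) (hpU s u)) (Ne.symm hne)
        have := hpos s u a hpos'
        nlinarith [h.symm]
      rcases mul_eq_zero.mp h0 with hs | hu
      · have hz : (∑ u', pS s * pU s u' * pA s u' a) = 0 :=
          Finset.sum_eq_zero fun u' _ => by rw [hs, zero_mul, zero_mul]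
        rw [hz, zero_mul]
      · simp [hu]
    · -- nondegenerate case
      have hDpos : 0 < ∑ u', pS s * pU s u' * pA s u' a := by
        have hle : pS s * pU s u * pA s u a ≤ ∑ u', pS s * pU s u' * pA s u' a :=
          Finset.single_le_sum (f := fun u' => pS s * pU s u' * pA s u' a)
            (fun u' _ => mul_nonneg (mul_nonneg (hpS s) (hpU s u')) (hpA s u' a))
            (Finset.mem_univ u)
        linarith
      have hnum0 : pS s * pU s u * pA s u a ≠ 0 := ne_of_gt h
      have hD0 : (∑ u', pS s * pU s u' * pA s u' a) ≠ 0 := ne_of_gt hDpos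
      rw [hcU]
      simp only [Jb]
      field_simp
      have hs0 : pS s ≠ 0 := fun h0 => hnum0 (by simp [h0])
      have ha0 : pA s u a ≠ 0 := fun h0 => hnum0 (by simp [h0])
      rw [div_eq_iff (mul_ne_zero hs0 ha0)]
      ring
  calc (∑ s, ∑ a, (∑ u, ∑ y, Jb pS pU pA pY s u a y) *
        (∑ y, (∑ u, pU s u * pY s u a y) * f s a y))
      = ∑ s, ∑ a, ∑ y, ∑ u, (∑ u', pS s * pU s u' * pA s u' a) *
          (pU s u * (pY s u a y * f s a y)) := by
        refine Finset.sum_congr rfl fun s _ => Finset.sum_congr rfl fun a _ => ?_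
        have hD : (∑ u, ∑ y, Jb pS pU pA pY s u a y)
            = ∑ u', pS s * pU s u' * pA s u' a :=
          Finset.sum_congr rfl fun u _ => hnum s u a
        rw [hD, Finset.mul_sum]
        refine Finset.sum_congr rfl fun y _ => ?_
        calc (∑ u', pS s * pU s u' * pA s u' a) * ((∑ u, pU s u * pY s u a y) * f s a y)
            = (∑ u, pU s u * pY s u a y) * ((∑ u', pS s * pU s u' * pA s u' a) * f s a y) := by
              ring
          _ = ∑ u, (∑ u', pS s * pU s u' * pA s u' a) * (pU s u * (pY s u a y * f s a y)) := by
              rw [Finset.sum_mul]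
              exact Finset.sum_congr rfl fun u _ => by ring
    _ = ∑ s, ∑ u, ∑ a, ∑ y, (∑ u', pS s * pU s u' * pA s u' a) *
          (pU s u * (pY s u a y * f s a y)) := by
        refine Finset.sum_congr rfl fun s _ => ?_
        rw [show (∑ a, ∑ y, ∑ u, (∑ u', pS s * pU s u' * pA s u' a) *
              (pU s u * (pY s u a y * f s a y)))
            = ∑ a, ∑ u, ∑ y, (∑ u', pS s * pU s u' * pA s u' a) *
              (pU s u * (pY s u a y * f s a y)) from
          Finset.sum_congr rfl fun a _ => Finset.sum_comm]
        exact Finset.sum_comm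
    _ = ∑ s, ∑ u, ∑ a, ∑ y,
          Jb pS pU pA pY s u a y * ((pU s u / cU pS pU pA pY s u a) * f s a y) := by
        refine Finset.sum_congr rfl fun s _ => Finset.sum_congr rfl fun u _ =>
          Finset.sum_congr rfl fun a _ => Finset.sum_congr rfl fun y _ => (key s u a y).symm

end
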